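/- arXiv:2604.13524 — 2 statements merged into one kernel-verified Lean document; each statement's English description precedes it below -/
import Mathlib

section
/- Let ε ∈ [0,1), M > 1, and let 𝓟 and 𝓔 be nonempty sets of density matrices on ℂ^d such that T(𝓟,𝓔) := inf_{ρ∈𝓟, τ∈𝓔} T(ρ,τ) > ε. If there exists a linear map L from 2×2 complex matrices to d×d complex matrices such that L(π_{M′}) ∈ 𝓔 for every M′ ∈ [M,∞) and T(L(|1⟩⟨1|), ρ) ≤ ε for some ρ ∈ 𝓟, then M · diam(𝓔) ≥ T(𝓟,𝓔) − ε, where diam(𝓔) := sup_{τ,τ′∈𝓔} T(τ,τ′). -/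
open Matrix ComplexOrder

/-- Trace norm of a complex matrix: the trace of `sqrt(AᴴA)` (sum of singular values). -/
noncomputable def traceNorm {n : Type*} [Fintype n] [DecidableEq n]
    (A : Matrix n n ℂ) : ℝ :=
  (((Matrix.posSemidef_conjTranspose_mul_self A).1.eigenvectorUnitary.1 *
      Matrix.diagonal (((↑) : ℝ → ℂ) ∘ (fun x : ℝ => Real.sqrt x) ∘
        (Matrix.posSemidef_conjTranspose_mul_self A).1.eigenvalues) *
      (star (Matrix.posSemidef_conjTranspose_mul_self A).1.eigenvectorUnitary :
        Matrix n n ℂ)).trace).re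

/-- Trace distance `T(X,Y) = ‖X - Y‖₁ / 2`. -/
noncomputable def traceDist {n : Type*} [Fintype n] [DecidableEq n]
    (X Y : Matrix n n ℂ) : ℝ :=
  traceNorm (X - Y) / 2

/-- A density matrix: positive semidefinite with unit trace. -/
def IsDensityMatrix {n : Type*} [Fintype n] (ρ : Matrix n n ℂ) : Prop :=
  ρ.PosSemidef ∧ ρ.trace = 1

/-- The battery Gibbs state `π_M = diag(1 - 1/M, 1/M)`. -/
noncomputable def piM (M : ℝ) : Matrix (Fin 2) (Fin 2) ℂ :=
  Matrix.diagonal ![((1 - 1/M : ℝ) : ℂ), ((1/M : ℝ) : ℂ)]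

/-- The excited battery state `|1⟩⟨1| = diag(0,1)`. -/
def ket1 : Matrix (Fin 2) (Fin 2) ℂ :=
  Matrix.diagonal ![0, 1]

/-- A test (POVM effect): `0 ≤ E ≤ I`. -/
def IsTest {n : Type*} [Fintype n] [DecidableEq n] (E : Matrix n n ℂ) : Prop :=
  E.PosSemidef ∧ (1 - E).PosSemidef

/-- Choi matrix `Σ_{ij} E_{ij} ⊗ F(E_{ij})` of a linear map on matrices. -/
noncomputable def choiMatrix {n m : Type*} [Fintype n] [DecidableEq n] [Fintype m]
    (F : Matrix n n ℂ →ₗ[ℂ] Matrix m m ℂ) :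
    Matrix (n × m) (n × m) ℂ :=
  fun p q => F (Matrix.single p.1 q.1 1) p.2 q.2

/-- Completely positive (positive semidefinite Choi matrix) and trace preserving. -/
def IsCPTP {n m : Type*} [Fintype n] [DecidableEq n] [Fintype m]
    (F : Matrix n n ℂ →ₗ[ℂ] Matrix m m ℂ) : Prop :=
  (choiMatrix F).PosSemidef ∧ ∀ X, (F X).trace = X.trace

/-- `n`-fold Kronecker (tensor) power of a `2 × 2` matrix, indexed by bit strings. -/
def tensPow (A : Matrix (Fin 2) (Fin 2) ℂ) (n : ℕ) :
    Matrix (Fin n → Fin 2) (Fin n → Fin 2) ℂ :=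
  fun x y => ∏ i, A (x i) (y i)

/-- `ε`-ball (in trace distance) of density matrices around a set `𝓟`. -/
noncomputable def metBall {n : Type*} [Fintype n] [DecidableEq n]
    (ε : ℝ) (P : Set (Matrix n n ℂ)) : Set (Matrix n n ℂ) :=
  {ω | IsDensityMatrix ω ∧ ∃ ρ ∈ P, traceDist ω ρ ≤ ε}

section
open scoped MatrixOrder

lemma traceNorm_eq_cfc {n : Type*} [Fintype n] [DecidableEq n] (A : Matrix n n ℂ) :
    traceNorm A = (cfc Real.sqrt (Aᴴ * A)).trace.re := by
  rw [(Matrix.posSemidef_conjTranspose_mul_self A).1.cfc_eq]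
  rfl

lemma traceNorm_eq_of_sq {n : Type*} [Fintype n] [DecidableEq n] {A S : Matrix n n ℂ}
    (hS : S.PosSemidef) (h : S ^ 2 = Aᴴ * A) : traceNorm A = S.trace.re := by
  have hX := Matrix.posSemidef_conjTranspose_mul_self A
  have e2 : cfc Real.sqrt (Aᴴ * A) = CFC.sqrt (Aᴴ * A) := by
    rw [CFC.sqrt_eq_cfc, cfc_nnreal_eq_real _ _ hX.nonneg]
    congr 1; funext x; rw [Real.sqrt]
  rw [traceNorm_eq_cfc, e2, CFC.sqrt_unique (b := S) (by rw [← sq, h]) hS.nonneg]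

lemma traceNorm_congr_sq {n : Type*} [Fintype n] [DecidableEq n] {A B : Matrix n n ℂ}
    (h : Aᴴ * A = Bᴴ * B) : traceNorm A = traceNorm B := by
  rw [traceNorm_eq_cfc, traceNorm_eq_cfc, h]

lemma traceNorm_neg {n : Type*} [Fintype n] [DecidableEq n] (A : Matrix n n ℂ) :
    traceNorm (-A) = traceNorm A := by
  apply traceNorm_congr_sq; simp

/-- trace norm of a PSD matrix is its trace. -/
lemma traceNorm_psd {n : Type*} [Fintype n] [DecidableEq n] {A : Matrix n n ℂ}
    (hA : A.PosSemidef) : traceNorm A = A.trace.re := by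
  exact traceNorm_eq_of_sq hA (by rw [pow_two, hA.1.eq])


lemma traceNorm_hermitian {n : Type*} [Fintype n] [DecidableEq n] {A : Matrix n n ℂ}
    (hA : A.IsHermitian) : traceNorm A = ∑ i, |hA.eigenvalues i| := by
  classical
  set U : Matrix n n ℂ := (Matrix.IsHermitian.eigenvectorUnitary hA : Matrix n n ℂ) with hUdef
  have hU1 : U * star U = 1 :=
    Matrix.mem_unitaryGroup_iff.mp (Matrix.IsHermitian.eigenvectorUnitary hA).2
  have hU2 : star U * U = 1 :=
    Matrix.mem_unitaryGroup_iff'.mp (Matrix.IsHermitian.eigenvectorUnitary hA).2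
  set D : Matrix n n ℂ := Matrix.diagonal (fun i => (hA.eigenvalues i : ℂ)) with hDdef
  set Dabs : Matrix n n ℂ :=
    Matrix.diagonal (fun i => ((|hA.eigenvalues i| : ℝ) : ℂ)) with hDadef
  have hspec : A = U * D * star U := by
    simpa [hUdef, hDdef, Function.comp_def] using hA.spectral_theorem
  set S : Matrix n n ℂ := U * Dabs * star U with hSdef
  have hDapsd : Dabs.PosSemidef := by
    rw [hDadef]
    refine Matrix.posSemidef_diagonal_iff.mpr fun i => ?_
    rw [Complex.zero_le_real]
    exact abs_nonneg _
  have hSpsd : S.PosSemidef := by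
    simpa [hSdef, Matrix.star_eq_conjTranspose] using hDapsd.mul_mul_conjTranspose_same U
  have hsq : S ^ 2 = Aᴴ * A := by
    have hDD : Dabs * Dabs = D * D := by
      have hf : (fun i => ((|hA.eigenvalues i| : ℝ) : ℂ) * ((|hA.eigenvalues i| : ℝ) : ℂ))
          = fun i => ((hA.eigenvalues i : ℂ) * (hA.eigenvalues i : ℂ)) := by
        funext i
        rw [← Complex.ofReal_mul, ← Complex.ofReal_mul, ← sq, ← sq, sq_abs]
      rw [hDadef, hDdef, Matrix.diagonal_mul_diagonal, Matrix.diagonal_mul_diagonal, hf]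
    have key : star U * (U * (Dabs * star U)) = Dabs * star U := by
      rw [← Matrix.mul_assoc, hU2, Matrix.one_mul]
    have key2 : star U * (U * (D * star U)) = D * star U := by
      rw [← Matrix.mul_assoc, hU2, Matrix.one_mul]
    have hDD' : Dabs * (Dabs * star U) = D * (D * star U) := by
      rw [← Matrix.mul_assoc, ← Matrix.mul_assoc, hDD]
    rw [hA.eq, hspec, sq, hSdef]
    simp only [Matrix.mul_assoc, key, key2, hDD']
  have hS_eq := traceNorm_eq_of_sq hSpsd hsq
  rw [hS_eq, hSdef, Matrix.trace_mul_cycle, hU2, Matrix.one_mul,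
    hDadef, Matrix.trace_diagonal]
  simp

lemma psd_smul {n : Type*} [Fintype n] [DecidableEq n] {A : Matrix n n ℂ} {r : ℝ}
    (hA : A.PosSemidef) (hr : 0 ≤ r) : ((r : ℂ) • A).PosSemidef := by
  exact hA.smul (by rw [Complex.zero_le_real]; exact hr)

lemma traceNorm_smul_nonneg {n : Type*} [Fintype n] [DecidableEq n] (A : Matrix n n ℂ)
    {r : ℝ} (hr : 0 ≤ r) : traceNorm ((r : ℂ) • A) = r * traceNorm A := by
  have h := Matrix.posSemidef_conjTranspose_mul_self A
  have hP : (CFC.sqrt (Aᴴ * A)).PosSemidef := (CFC.sqrt_nonneg _).posSemidef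
  have hsq0 : CFC.sqrt (Aᴴ * A) ^ 2 = Aᴴ * A := by
    rw [sq]; exact CFC.sqrt_mul_sqrt_self _ h.nonneg
  have hsq : ((r : ℂ) • CFC.sqrt (Aᴴ * A)) ^ 2 = ((r : ℂ) • A)ᴴ * ((r : ℂ) • A) := by
    rw [Matrix.conjTranspose_smul, Matrix.smul_mul, Matrix.mul_smul, sq,
      Matrix.smul_mul, Matrix.mul_smul, CFC.sqrt_mul_sqrt_self _ h.nonneg]
    simp [smul_smul, Complex.conj_ofReal]
  rw [traceNorm_eq_of_sq (psd_smul hP hr) hsq, traceNorm_eq_of_sq hP hsq0, Matrix.trace_smul]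
  simp

end

/-- Key contraction bound: `Re tr((V diag(s) V*) A) ≤ ‖A‖₁` for Hermitian `A`,
unitary `V` and real `|s i| ≤ 1`. -/
lemma re_trace_contraction_mul_le {n : Type*} [Fintype n] [DecidableEq n]
    {A V : Matrix n n ℂ} (hA : A.IsHermitian) (hV : V ∈ Matrix.unitaryGroup n ℂ)
    {s : n → ℝ} (hs : ∀ i, |s i| ≤ 1) :
    ((V * Matrix.diagonal (fun i => (s i : ℂ)) * star V * A).trace).re ≤ traceNorm A := by
  classical
  set W : Matrix n n ℂ := (Matrix.IsHermitian.eigenvectorUnitary hA : Matrix n n ℂ) with hWdef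
  have hW2 : star W * W = 1 :=
    Matrix.mem_unitaryGroup_iff'.mp (Matrix.IsHermitian.eigenvectorUnitary hA).2
  have hV1 : V * star V = 1 := Matrix.mem_unitaryGroup_iff.mp hV
  set Dl : Matrix n n ℂ := Matrix.diagonal (fun i => (hA.eigenvalues i : ℂ)) with hDldef
  set Ds : Matrix n n ℂ := Matrix.diagonal (fun i => (s i : ℂ)) with hDsdef
  have hspecA : A = W * Dl * star W := by
    simpa [hWdef, hDldef, Function.comp_def] using hA.spectral_theorem
  set R : Matrix n n ℂ := star V * W with hRdef
  -- columns of R are unit vectors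
  have hR1 : star R * R = 1 := by
    rw [hRdef, Matrix.star_mul, star_star]
    calc star W * V * (star V * W) = star W * ((V * star V) * W) := by
          simp only [Matrix.mul_assoc]
      _ = 1 := by rw [hV1, Matrix.one_mul, hW2]
  have hcol : ∀ j, ∑ k, Complex.normSq (R k j) = 1 := by
    intro j
    have h1 : (star R * R) j j = 1 := by rw [hR1]; simp
    have h2 : (star R * R) j j = ∑ k, (Complex.normSq (R k j) : ℂ) := by
      rw [Matrix.mul_apply]
      congr 1; funext k
      rw [Matrix.star_apply, RCLike.star_def, mul_comm, Complex.mul_conj]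
    rw [h2] at h1
    have := congrArg Complex.re h1
    rw [Complex.re_sum] at this
    simpa using this
  -- rewrite the trace
  have htr : (V * Ds * star V * A).trace = (star R * Ds * R * Dl).trace := by
    rw [hspecA,
      show V * Ds * star V * (W * Dl * star W) = (V * Ds * star V * W * Dl) * star W by
        simp only [Matrix.mul_assoc],
      Matrix.trace_mul_comm]
    congr 1
    rw [hRdef, Matrix.star_mul, star_star]
    simp only [Matrix.mul_assoc]
  rw [htr,
    show star R * Ds * R * Dl = (star R * Ds * R) * Dl by simp only [Matrix.mul_assoc]]
  have htr2 : ((star R * Ds * R) * Dl).trace = ∑ j, (star R * Ds * R) j j * (hA.eigenvalues j : ℂ) := by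
    simp [hDldef, Matrix.trace, Matrix.mul_diagonal, Matrix.diag]
  rw [htr2, Complex.re_sum, traceNorm_hermitian hA]
  apply Finset.sum_le_sum
  intro j _
  -- compute the diagonal entry
  have hentry : ((star R * Ds * R) j j).re = ∑ k, s k * Complex.normSq (R k j) := by
    rw [show star R * Ds * R = (star R * Ds) * R by simp only [Matrix.mul_assoc],
      Matrix.mul_apply, Complex.re_sum]
    congr 1; funext k
    rw [hDsdef, Matrix.mul_diagonal, Matrix.star_apply, RCLike.star_def]
    have : (starRingEnd ℂ) (R k j) * (s k : ℂ) * R k j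
        = (s k : ℂ) * ((Complex.normSq (R k j) : ℝ) : ℂ) := by
      rw [mul_comm ((starRingEnd ℂ) (R k j)) ((s k : ℂ)), mul_assoc, mul_comm ((starRingEnd ℂ) (R k j)), Complex.mul_conj]
    rw [this]
    simp [Complex.ofReal_mul]
  have hbound : |((star R * Ds * R) j j).re| ≤ 1 := by
    rw [hentry]
    calc |∑ k, s k * Complex.normSq (R k j)| ≤ ∑ k, |s k * Complex.normSq (R k j)| :=
          Finset.abs_sum_le_sum_abs _ _
      _ ≤ ∑ k, Complex.normSq (R k j) := by
          apply Finset.sum_le_sum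
          intro k _
          rw [abs_mul, abs_of_nonneg (Complex.normSq_nonneg _)]
          calc |s k| * Complex.normSq (R k j) ≤ 1 * Complex.normSq (R k j) :=
                mul_le_mul_of_nonneg_right (hs k) (Complex.normSq_nonneg _)
            _ = _ := one_mul _
      _ = 1 := hcol j
  have : (((star R * Ds * R) j j) * (hA.eigenvalues j : ℂ)).re
      = ((star R * Ds * R) j j).re * hA.eigenvalues j := by
    simp [Complex.mul_re]
  rw [this]
  calc ((star R * Ds * R) j j).re * hA.eigenvalues j
      ≤ |((star R * Ds * R) j j).re * hA.eigenvalues j| := le_abs_self _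
    _ = |((star R * Ds * R) j j).re| * |hA.eigenvalues j| := abs_mul _ _
    _ ≤ 1 * |hA.eigenvalues j| := by
        exact mul_le_mul_of_nonneg_right hbound (abs_nonneg _)
    _ = |hA.eigenvalues j| := one_mul _

lemma traceNorm_add_le_of_hermitian {n : Type*} [Fintype n] [DecidableEq n]
    {A B : Matrix n n ℂ} (hA : A.IsHermitian) (hB : B.IsHermitian) :
    traceNorm (A + B) ≤ traceNorm A + traceNorm B := by
  classical
  have hC : (A + B).IsHermitian := hA.add hB
  set V : Matrix n n ℂ := (Matrix.IsHermitian.eigenvectorUnitary hC : Matrix n n ℂ) with hVdef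
  have hVmem : V ∈ Matrix.unitaryGroup n ℂ := (Matrix.IsHermitian.eigenvectorUnitary hC).2
  have hV2 : star V * V = 1 := Matrix.mem_unitaryGroup_iff'.mp hVmem
  set s : n → ℝ := fun i => if hC.eigenvalues i < 0 then -1 else 1 with hsdef
  have hs : ∀ i, |s i| ≤ 1 := by
    intro i; rw [hsdef]; dsimp only; split <;> norm_num
  set Ds : Matrix n n ℂ := Matrix.diagonal (fun i => (s i : ℂ)) with hDsdef
  set Dm : Matrix n n ℂ := Matrix.diagonal (fun i => (hC.eigenvalues i : ℂ)) with hDmdef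
  have hspec : A + B = V * Dm * star V := by
    simpa [hVdef, hDmdef, Function.comp_def] using hC.spectral_theorem
  have hmain : ((V * Ds * star V * (A + B)).trace).re = traceNorm (A + B) := by
    rw [traceNorm_hermitian hC,
      show V * Ds * star V * (A + B) = V * (Ds * ((star V * V) * (Dm * star V))) by
        rw [hspec]; simp only [Matrix.mul_assoc],
      hV2, Matrix.one_mul,
      show V * (Ds * (Dm * star V)) = V * (Ds * Dm) * star V by simp only [Matrix.mul_assoc],
      Matrix.trace_mul_cycle, ← Matrix.mul_assoc, hV2, Matrix.one_mul]
    rw [hDsdef, hDmdef, Matrix.diagonal_mul_diagonal, Matrix.trace_diagonal, Complex.re_sum]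
    congr 1; funext i
    rw [show (s i : ℂ) * (hC.eigenvalues i : ℂ) = ((s i * hC.eigenvalues i : ℝ) : ℂ) by push_cast; ring,
      Complex.ofReal_re, hsdef]
    dsimp only
    split
    · rename_i h; rw [abs_of_neg h]; ring
    · rename_i h; rw [abs_of_nonneg (not_lt.mp h)]; ring
  have hsplit : V * Ds * star V * (A + B) = V * Ds * star V * A + V * Ds * star V * B :=
    Matrix.mul_add _ _ _
  rw [← hmain, hsplit, Matrix.trace_add, Complex.add_re]
  exact add_le_add (re_trace_contraction_mul_le hA hVmem hs)
    (re_trace_contraction_mul_le hB hVmem hs)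

lemma herm_real_smul {n : Type*} [Fintype n] [DecidableEq n] {X : Matrix n n ℂ} {r : ℝ}
    (h : X.IsHermitian) : (((r : ℝ) : ℂ) • X).IsHermitian := by
  rw [Matrix.IsHermitian, Matrix.conjTranspose_smul, h.eq]
  congr 1
  simp

lemma traceDist_nonneg' {n : Type*} [Fintype n] [DecidableEq n] {X Y : Matrix n n ℂ}
    (h : (X - Y).IsHermitian) : 0 ≤ traceDist X Y := by
  rw [traceDist, traceNorm_hermitian h]
  positivity

lemma traceDist_comm {n : Type*} [Fintype n] [DecidableEq n] (X Y : Matrix n n ℂ) :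
    traceDist X Y = traceDist Y X := by
  rw [traceDist, traceDist, ← traceNorm_neg (X - Y), neg_sub]

lemma traceDist_triangle' {n : Type*} [Fintype n] [DecidableEq n] {X Y Z : Matrix n n ℂ}
    (h1 : (X - Y).IsHermitian) (h2 : (Y - Z).IsHermitian) :
    traceDist X Z ≤ traceDist X Y + traceDist Y Z := by
  have : X - Z = (X - Y) + (Y - Z) := by abel
  rw [traceDist, traceDist, traceDist, this, ← add_div, div_le_div_iff_of_pos_right]
  · exact traceNorm_add_le_of_hermitian h1 h2
  · norm_num

lemma traceNorm_density {n : Type*} [Fintype n] [DecidableEq n] {X : Matrix n n ℂ}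
    (hX : IsDensityMatrix X) : traceNorm X = 1 := by
  rw [traceNorm_psd hX.1, hX.2]
  simp

lemma traceDist_le_one {n : Type*} [Fintype n] [DecidableEq n] {X Y : Matrix n n ℂ}
    (hX : IsDensityMatrix X) (hY : IsDensityMatrix Y) : traceDist X Y ≤ 1 := by
  rw [traceDist, sub_eq_add_neg]
  have := traceNorm_add_le_of_hermitian hX.1.1 hY.1.1.neg
  rw [traceNorm_neg, traceNorm_density hX, traceNorm_density hY] at this
  linarith

lemma piM_decomp {M M' : ℝ} (hM : 1 < M) (hM' : M < M') :
    piM M = ((1 - (M' - M)/(M*(M'-1)) : ℝ) : ℂ) • piM M'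
      + (((M' - M)/(M*(M'-1)) : ℝ) : ℂ) • ket1 := by
  have hM0 : M ≠ 0 := by positivity
  have hM'0 : M' ≠ 0 := by nlinarith
  have hM'1 : M' - 1 ≠ 0 := by nlinarith
  have e0 : (1 - 1/M : ℝ) = (1 - (M' - M)/(M*(M'-1))) * (1 - 1/M') := by
    field_simp; ring
  have e1 : (1/M : ℝ) = (1 - (M' - M)/(M*(M'-1))) * (1/M') + (M' - M)/(M*(M'-1)) := by
    field_simp; ring
  ext i j
  fin_cases i <;> fin_cases j <;>
    simp [piM, ket1, Matrix.diagonal, Matrix.add_apply, Matrix.smul_apply]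
  · rw [← one_div, ← one_div]; exact_mod_cast e0
  · rw [← one_div, ← one_div]; exact_mod_cast e1

/-- geometric lower bound on the work cost from a dirty battery:
`M · diam(𝓔) ≥ T(𝓟,𝓔) - ε` for any feasible Gibbs-preserving linear map. -/
theorem stmt_11 {d : ℕ} (ε M : ℝ) (hε : ε ∈ Set.Ico (0:ℝ) 1) (hM : 1 < M)
    (𝓟 𝓔 : Set (Matrix (Fin d) (Fin d) ℂ))
    (h𝓟ne : 𝓟.Nonempty) (h𝓔ne : 𝓔.Nonempty)
    (h𝓟 : ∀ ρ ∈ 𝓟, IsDensityMatrix ρ) (h𝓔 : ∀ τ ∈ 𝓔, IsDensityMatrix τ)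
    (hsep : ε < sInf {r : ℝ | ∃ ρ ∈ 𝓟, ∃ τ ∈ 𝓔, r = traceDist ρ τ})
    (L : Matrix (Fin 2) (Fin 2) ℂ →ₗ[ℂ] Matrix (Fin d) (Fin d) ℂ)
    (hL𝓔 : ∀ M' : ℝ, M ≤ M' → L (piM M') ∈ 𝓔)
    (hL𝓟 : ∃ ρ ∈ 𝓟, traceDist (L ket1) ρ ≤ ε) :
    M * sSup {r : ℝ | ∃ τ ∈ 𝓔, ∃ τ' ∈ 𝓔, r = traceDist τ τ'} ≥
      sInf {r : ℝ | ∃ ρ ∈ 𝓟, ∃ τ ∈ 𝓔, r = traceDist ρ τ} - ε := by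
  obtain ⟨hε0, hε1⟩ := hε
  set S1 := {r : ℝ | ∃ ρ ∈ 𝓟, ∃ τ ∈ 𝓔, r = traceDist ρ τ} with hS1
  set S2 := {r : ℝ | ∃ τ ∈ 𝓔, ∃ τ' ∈ 𝓔, r = traceDist τ τ'} with hS2
  set T := sInf S1 with hT
  set D := sSup S2 with hD
  have hBddBelow : BddBelow S1 := by
    refine ⟨0, fun r hr => ?_⟩
    obtain ⟨ρ, hρ, τ, hτ, rfl⟩ := hr
    exact traceDist_nonneg' ((h𝓟 _ hρ).1.1.sub (h𝓔 _ hτ).1.1)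
  have hBddAbove : BddAbove S2 := by
    refine ⟨1, fun r hr => ?_⟩
    obtain ⟨τ, hτ, τ', hτ', rfl⟩ := hr
    exact traceDist_le_one (h𝓔 _ hτ) (h𝓔 _ hτ')
  have hTle : ∀ ρ ∈ 𝓟, ∀ τ ∈ 𝓔, T ≤ traceDist ρ τ := fun ρ hρ τ hτ =>
    csInf_le hBddBelow ⟨ρ, hρ, τ, hτ, rfl⟩
  have hDge : ∀ τ ∈ 𝓔, ∀ τ' ∈ 𝓔, traceDist τ τ' ≤ D := fun τ hτ τ' hτ' =>
    le_csSup hBddAbove ⟨τ, hτ, τ', hτ', rfl⟩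
  have hD0 : 0 ≤ D := by
    obtain ⟨τ, hτ⟩ := h𝓔ne
    have h1 : (0:ℝ) ≤ traceDist τ τ := by
      apply traceDist_nonneg'
      rw [sub_self]
      exact Matrix.isHermitian_zero
    exact le_trans h1 (hDge τ hτ τ hτ)
  obtain ⟨ρ, hρP, hρε⟩ := hL𝓟
  have hρd := h𝓟 ρ hρP
  have main : ∀ M', M < M' → ((M' - M)/(M*(M'-1))) * (T - ε) ≤ D := by
    intro M' hM'
    set lam := (M' - M)/(M*(M'-1)) with hlam
    have hden : (0:ℝ) < M*(M'-1) := by nlinarith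
    have hlam_pos : 0 < lam := div_pos (by linarith) hden
    set τ1 := L (piM M) with hτ1def
    set τ2 := L (piM M') with hτ2def
    have hτ1 : τ1 ∈ 𝓔 := hL𝓔 M le_rfl
    have hτ2 : τ2 ∈ 𝓔 := hL𝓔 M' hM'.le
    have hτ1d := h𝓔 _ hτ1
    have hτ2d := h𝓔 _ hτ2
    have hdecomp : τ1 = ((1 - lam : ℝ) : ℂ) • τ2 + ((lam : ℝ) : ℂ) • L ket1 := by
      rw [hτ1def, hτ2def, piM_decomp hM hM', map_add, LinearMap.map_smul, LinearMap.map_smul,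
        ← hlam]
    have hdiff : τ1 - τ2 = ((lam : ℝ) : ℂ) • (L ket1 - τ2) := by
      rw [hdecomp]
      have : ((1 - lam : ℝ) : ℂ) = 1 - ((lam : ℝ) : ℂ) := by push_cast; ring
      rw [this]
      module
    have hk_herm : (L ket1 - τ2).IsHermitian := by
      have h12 : (τ1 - τ2).IsHermitian := hτ1d.1.1.sub hτ2d.1.1
      have heq : L ket1 - τ2 = ((lam⁻¹ : ℝ) : ℂ) • (τ1 - τ2) := by
        rw [hdiff, smul_smul, ← Complex.ofReal_mul, inv_mul_cancel₀ hlam_pos.ne']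
        simp
      rw [heq]
      exact herm_real_smul h12
    have hρk_herm : (ρ - L ket1).IsHermitian := by
      have : ρ - L ket1 = (ρ - τ2) - (L ket1 - τ2) := by abel
      rw [this]
      exact (hρd.1.1.sub hτ2d.1.1).sub hk_herm
    have hdist12 : traceDist τ1 τ2 = lam * traceDist (L ket1) τ2 := by
      rw [traceDist, traceDist, hdiff, traceNorm_smul_nonneg _ hlam_pos.le]
      ring
    have htri : traceDist ρ τ2 ≤ traceDist ρ (L ket1) + traceDist (L ket1) τ2 :=
      traceDist_triangle' hρk_herm hk_herm
    have h1 : T ≤ traceDist ρ τ2 := hTle ρ hρP _ hτ2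
    have h2 : traceDist ρ (L ket1) ≤ ε := by rw [traceDist_comm]; exact hρε
    have h3 : T - ε ≤ traceDist (L ket1) τ2 := by linarith
    have h4 : traceDist τ1 τ2 ≤ D := hDge _ hτ1 _ hτ2
    calc lam * (T - ε) ≤ lam * traceDist (L ket1) τ2 :=
          mul_le_mul_of_nonneg_left h3 hlam_pos.le
      _ = traceDist τ1 τ2 := hdist12.symm
      _ ≤ D := h4
  rw [ge_iff_le]
  by_contra hcon
  push_neg at hcon
  have hTε : 0 < T - ε := by
    have : ε < T := hsep
    linarith
  set c := T - ε - M*D with hc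
  have hcpos : 0 < c := by
    rw [hc]
    linarith
  set M' := max (M+1) (M*(T-ε)/c + 1) with hM'def
  have hM'gt : M < M' := lt_of_lt_of_le (by linarith) (le_max_left _ _)
  have hM'ge : M*(T-ε)/c + 1 ≤ M' := le_max_right _ _
  have hkey := main M' hM'gt
  have hden : (0:ℝ) < M*(M'-1) := by nlinarith
  have hkey2 : (M' - M)*(T - ε) ≤ D * (M*(M'-1)) := by
    rw [div_mul_eq_mul_div] at hkey
    exact (div_le_iff₀ hden).mp hkey
  have hM'c : M*(T-ε) + c ≤ M'*c := by
    have h5 : (M*(T-ε)/c + 1)*c ≤ M'*c := mul_le_mul_of_nonneg_right hM'ge hcpos.le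
    rw [add_mul, one_mul, div_mul_cancel₀ _ hcpos.ne'] at h5
    exact h5
  nlinarith [mul_nonneg (mul_nonneg (le_of_lt (lt_trans zero_lt_one hM)) hD0) (sub_nonneg.mpr hM'gt.le)]
end

section
/- Let n ≥ 2 be an integer, δ > 0, M₀ ∈ [2, 2+δ], let ω be a 2^n×2^n complex matrix, and let λ > 0. Suppose that for every p ∈ (0, λ] there exists M(p) ∈ [2, 2+δ] such that (1−p)·π_{M₀}^{⊗n} + p·ω = π_{M(p)}^{⊗n}. Then ω = π_{M₀}^{⊗n}. -/
open Matrix ComplexOrder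

lemma tensPow_diag_entry (A : Matrix (Fin 2) (Fin 2) ℂ) (N : ℕ) (s : Finset (Fin N)) :
    tensPow A N (fun i => if i ∈ s then 1 else 0) (fun i => if i ∈ s then 1 else 0)
      = A 1 1 ^ s.card * A 0 0 ^ (N - s.card) := by
  unfold tensPow
  have h : ∀ i, A (if i ∈ s then 1 else 0) (if i ∈ s then 1 else 0)
      = if i ∈ s then A 1 1 else A 0 0 := fun i => by split <;> rfl
  simp_rw [h, Finset.prod_ite, Finset.prod_const]
  congr 1
  · congr 1
    simp [Finset.filter_mem_eq_inter]
  · congr 1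
    have : Finset.filter (fun x => x ∉ s) Finset.univ = sᶜ := by ext i; simp
    rw [this, Finset.card_compl, Fintype.card_fin]

/-- the set `{π_M^{⊗n} : M ∈ [2,2+δ]}` contains no non-degenerate
line segment anchored at one of its points, for `n ≥ 2`. -/
theorem stmt_17 (n : ℕ) (hn : 2 ≤ n) (δ : ℝ) (hδ : 0 < δ)
    (M₀ : ℝ) (hM₀ : M₀ ∈ Set.Icc (2:ℝ) (2 + δ))
    (ω : Matrix (Fin n → Fin 2) (Fin n → Fin 2) ℂ)
    (lam : ℝ) (hlam : 0 < lam)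
    (h : ∀ p ∈ Set.Ioc (0:ℝ) lam, ∃ Mp ∈ Set.Icc (2:ℝ) (2 + δ),
      (1 - p) • tensPow (piM M₀) n + p • ω = tensPow (piM Mp) n) :
    ω = tensPow (piM M₀) n := by
  obtain ⟨m, rfl⟩ : ∃ m, n = m + 2 := ⟨n - 2, by omega⟩
  obtain ⟨M₁, hM₁, e1⟩ := h lam ⟨hlam, le_refl _⟩
  obtain ⟨M₂, hM₂, e2⟩ := h (lam/2) ⟨by linarith, by linarith⟩
  have comb : tensPow (piM M₀) (m+2) + tensPow (piM M₁) (m+2)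
      = (2:ℝ) • tensPow (piM M₂) (m+2) := by
    rw [← e1, ← e2]; module
  set u : ℝ := 1/M₀ with hu
  set v : ℝ := 1/M₁ with hv
  set w : ℝ := 1/M₂ with hw
  have p00 : ∀ M : ℝ, piM M 0 0 = ((1 - 1/M : ℝ) : ℂ) := fun M => by simp [piM]
  have p11 : ∀ M : ℝ, piM M 1 1 = ((1/M : ℝ) : ℂ) := fun M => by simp [piM]
  have key : ∀ s : Finset (Fin (m+2)),
      ((u:ℝ):ℂ)^s.card * ((1-u:ℝ):ℂ)^(m+2-s.card)
      + ((v:ℝ):ℂ)^s.card * ((1-v:ℝ):ℂ)^(m+2-s.card)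
      = 2 * (((w:ℝ):ℂ)^s.card * ((1-w:ℝ):ℂ)^(m+2-s.card)) := by
    intro s
    have hc := congrFun (congrFun comb (fun i => if i ∈ s then 1 else 0))
      (fun i => if i ∈ s then 1 else 0)
    simp only [Matrix.add_apply, Matrix.smul_apply, tensPow_diag_entry,
      p00, p11, Complex.real_smul, Complex.ofReal_ofNat] at hc
    rw [← hu, ← hv, ← hw] at hc
    exact hc
  have c0 : ((∅ : Finset (Fin (m+2)))).card = 0 := Finset.card_empty
  have h01 : (0 : Fin (m+2)) ≠ 1 := by simp [Fin.ext_iff]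
  have c1 : ({0} : Finset (Fin (m+2))).card = 1 := Finset.card_singleton _
  have c2 : ({0, 1} : Finset (Fin (m+2))).card = 2 := by
    rw [Finset.card_insert_of_notMem (by simpa using h01), Finset.card_singleton]
  have E1 : (1-u)^(m+2) + (1-v)^(m+2) = 2*(1-w)^(m+2) := by
    have := key ∅
    rw [c0] at this
    simp only [pow_zero, one_mul, Nat.sub_zero] at this
    exact_mod_cast this
  have E2 : u*(1-u)^(m+1) + v*(1-v)^(m+1) = 2*(w*(1-w)^(m+1)) := by
    have := key {0}
    rw [c1, show m+2-1 = m+1 from rfl] at this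
    simp only [pow_one] at this
    exact_mod_cast this
  have E3 : u^2*(1-u)^m + v^2*(1-v)^m = 2*(w^2*(1-w)^m) := by
    have := key {0, 1}
    rw [c2, show m+2-2 = m from rfl] at this
    exact_mod_cast this
  have hM₀2 : (2:ℝ) ≤ M₀ := hM₀.1
  have hM₁2 : (2:ℝ) ≤ M₁ := hM₁.1
  have hu0 : 0 < u := by rw [hu]; positivity
  have hv0 : 0 < v := by rw [hv]; positivity
  have hu2 : u ≤ 1/2 := by rw [hu]; exact one_div_le_one_div_of_le (by norm_num) hM₀2
  have hv2 : v ≤ 1/2 := by rw [hv]; exact one_div_le_one_div_of_le (by norm_num) hM₁2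
  have ha : (0:ℝ) < 1 - u := by linarith
  have hb : (0:ℝ) < 1 - v := by linarith
  have h12 : ((1-u)^(m+2) + (1-v)^(m+2)) * (u^2*(1-u)^m + v^2*(1-v)^m)
      = (u*(1-u)^(m+1) + v*(1-v)^(m+1))^2 := by rw [E1, E2, E3]; ring
  have key2 : ((1-u)^(m+2)*(1-v)^m*v^2 - (1-v)^(m+2)*(1-u)^m*u^2)^2 = 0 := by
    linear_combination (((1-u)^(m+2)+(1-v)^(m+2))*(u^2*(1-u)^m+v^2*(1-v)^m)
      - (u*(1-u)^(m+1)+v*(1-v)^(m+1))^2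
      + 4*(u*(1-u)^(m+1))*(v*(1-v)^(m+1))) * h12
  have key3 : (1-u)^(m+2)*(1-v)^m*v^2 = (1-v)^(m+2)*(1-u)^m*u^2 :=
    sub_eq_zero.mp (pow_eq_zero_iff two_ne_zero |>.mp key2)
  have key4 : (1-u)^m*(1-v)^m*(((1-u)*v)^2 - ((1-v)*u)^2) = 0 := by
    linear_combination key3
  have hpos : (0:ℝ) < (1-u)^m*(1-v)^m := by positivity
  have key5 : ((1-u)*v)^2 = ((1-v)*u)^2 := by
    have := (mul_eq_zero.mp key4).resolve_left (ne_of_gt hpos)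
    linarith [sub_eq_zero.mp this]
  have key6 : (1-u)*v = (1-v)*u := by
    have hfac : ((1-u)*v - (1-v)*u)*((1-u)*v + (1-v)*u) = 0 := by
      linear_combination key5
    rcases mul_eq_zero.mp hfac with h' | h'
    · linarith [sub_eq_zero.mp h']
    · linarith [mul_pos ha hv0, mul_pos hb hu0]
  have huv : u = v := by linear_combination (-1 : ℝ) * key6
  have huv' : 1/M₀ = 1/M₁ := by rw [← hu, ← hv, huv]
  have hM01 : M₀ = M₁ := by
    rw [← one_div_one_div M₀, ← one_div_one_div M₁, huv']
  rw [← hM01] at e1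
  have hsm : lam • ω = lam • tensPow (piM M₀) (m+2) := by
    have : lam • ω = ((1-lam) • tensPow (piM M₀) (m+2) + lam • ω)
        - (1-lam) • tensPow (piM M₀) (m+2) := by module
    rw [this, e1]; module
  exact smul_right_injective _ (ne_of_gt hlam) hsm
end
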